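/- Fix a positive integer k, a constant c > 0, and a sequence α_n > 0 with α_n n^{−1/4} → 0. If f is a real-valued function on k-tuples of configurations σ^(1),…,σ^(k) ∈ {−1,+1}^n with |f(σ^(1),…,σ^(k))| ≤ c α_n² q_max, where q_max = max_{i≠j} |q(σ^(i),σ^(j))|, then 2^{−nk} Σ_{σ^(1),…,σ^(k)} exp(f(σ^(1),…,σ^(k))) = 1 + o(1) as n → ∞. -/

import Mathlib

open Finset Filter

/-- The map sending a Boolean to the spin value `±1`. -/
noncomputable def spin (b : Bool) : ℝ := if b then 1 else -1

/-- The overlap `q(σ,σ') = (1/n) ∑_s σ_s σ'_s` of two spin configurations. -/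
noncomputable def overlap {n : ℕ} (σ τ : Fin n → Bool) : ℝ :=
  (n : ℝ)⁻¹ * ∑ s, spin (σ s) * spin (τ s)

/-- The maximal off-diagonal overlap `q_max = max_{i≠j} |q_{ij}|` of a `k`-tuple of
spin configurations (equal to `0` when `k = 1`). -/
noncomputable def qmax {k n : ℕ} (σ : Fin k → Fin n → Bool) : ℝ :=
  ((Finset.univ : Finset (Fin k)).offDiag.sup
    fun p => Real.toNNReal |overlap (σ p.1) (σ p.2)| : NNReal)

lemma spin_sq (b : Bool) : spin b * spin b = 1 := by cases b <;> simp [spin]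

lemma spin_beq (a b : Bool) : spin a * spin (a == b) = spin b := by
  cases a <;> cases b <;> simp [spin]

lemma beq_beq (a b : Bool) : (a == (a == b)) = b := by cases a <;> cases b <;> rfl

lemma sum_eval {k : ℕ} {F : Type*} [Fintype F] [DecidableEq F] (j : Fin k) (H : F → ℝ) :
    ∑ σ : Fin k → F, H (σ j) = (Fintype.card F : ℝ) ^ (k - 1) * ∑ τ, H τ := by
  have h1 : ∀ σ : Fin k → F, H (σ j) = ∏ i, (if i = j then H (σ i) else 1) := by
    intro σ
    rw [Finset.prod_ite_eq' Finset.univ j (fun i => H (σ i))]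
    simp
  calc ∑ σ : Fin k → F, H (σ j)
      = ∑ σ : Fin k → F, ∏ i, (if i = j then H (σ i) else 1) := by
        exact Finset.sum_congr rfl fun σ _ => h1 σ
    _ = ∏ i : Fin k, ∑ x : F, (if i = j then H x else 1) :=
        (Fintype.prod_sum (κ := fun _ : Fin k => F) (fun i x => if i = j then H x else 1)).symm
    _ = (∑ x : F, H x) * ∏ i ∈ Finset.univ.erase j, ∑ x : F, (if i = j then H x else 1) := by
        rw [← Finset.mul_prod_erase Finset.univ _ (Finset.mem_univ j)]
        simp
    _ = (∑ x : F, H x) * (Fintype.card F : ℝ) ^ (k - 1) := by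
        congr 1
        have heach : ∀ i ∈ Finset.univ.erase j,
            (∑ x : F, if i = j then H x else 1) = (Fintype.card F : ℝ) := by
          intro i hi
          simp [Finset.ne_of_mem_erase hi, Finset.sum_const]
        rw [Finset.prod_congr rfl heach, Finset.prod_const,
          Finset.card_erase_of_mem (Finset.mem_univ j), Finset.card_univ, Fintype.card_fin]
    _ = (Fintype.card F : ℝ) ^ (k - 1) * ∑ τ, H τ := mul_comm _ _

lemma sum_pair_overlap {n k : ℕ} (i j : Fin k) (hij : i ≠ j) (G : ℝ → ℝ) :
    ∑ σ : Fin k → Fin n → Bool, G (overlap (σ i) (σ j))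
      = ((2 : ℝ) ^ n) ^ (k - 1) * ∑ τ : Fin n → Bool, G ((n : ℝ)⁻¹ * ∑ s, spin (τ s)) := by
  set T : (Fin k → Fin n → Bool) → (Fin k → Fin n → Bool) :=
    fun σ => Function.update σ j (fun s => σ i s == σ j s) with hT
  have hTi : ∀ σ, T σ i = σ i := fun σ => Function.update_of_ne hij _ _
  have hTj : ∀ σ, T σ j = fun s => σ i s == σ j s := fun σ => Function.update_self _ _ _
  have hinv : Function.Involutive T := by
    intro σ
    funext l
    by_cases hl : l = j
    · subst hl
      rw [hTj, hTi, hTj]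
      funext s
      exact beq_beq _ _
    · rw [hT]
      simp only [Function.update_of_ne hl]
  have key : ∑ σ : Fin k → Fin n → Bool, G ((n : ℝ)⁻¹ * ∑ s, spin (σ j s))
      = ∑ σ : Fin k → Fin n → Bool, G (overlap (σ i) (σ j)) := by
    apply Fintype.sum_bijective T hinv.bijective
    intro σ
    rw [hTi, hTj]
    unfold overlap
    congr 2
    exact Finset.sum_congr rfl fun s _ => (spin_beq _ _).symm
  rw [← key, sum_eval (F := Fin n → Bool) j (fun τ => G ((n : ℝ)⁻¹ * ∑ s, spin (τ s)))]
  norm_num [Fintype.card_fun]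

lemma sum_exp_spin (n : ℕ) (t : ℝ) :
    ∑ τ : Fin n → Bool, Real.exp (t * ∑ s, spin (τ s))
      = (Real.exp t + Real.exp (-t)) ^ n := by
  have h1 : ∀ τ : Fin n → Bool, Real.exp (t * ∑ s, spin (τ s))
      = ∏ s, Real.exp (t * spin (τ s)) := by
    intro τ
    rw [Finset.mul_sum, Real.exp_sum]
  rw [Finset.sum_congr rfl fun τ _ => h1 τ,
    ← Fintype.prod_sum (κ := fun _ : Fin n => Bool) (fun _ b => Real.exp (t * spin b))]
  simp [spin, Finset.prod_const]

lemma sum_sq_spin (n : ℕ) :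
    ∑ τ : Fin n → Bool, (∑ s, spin (τ s)) ^ 2 = 2 ^ n * n := by
  have expand : ∀ τ : Fin n → Bool,
      (∑ s, spin (τ s)) ^ 2 = ∑ s : Fin n, ∑ t : Fin n, spin (τ s) * spin (τ t) := by
    intro τ
    rw [sq, Finset.sum_mul_sum]
  have inner : ∀ s t : Fin n, ∑ τ : Fin n → Bool, spin (τ s) * spin (τ t)
      = if s = t then (2 : ℝ) ^ n else 0 := by
    intro s t
    by_cases hst : s = t
    · subst hst
      simp [spin_sq, Finset.sum_const, Fintype.card_fun]
    · have hrw : ∀ τ : Fin n → Bool, spin (τ s) * spin (τ t)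
          = ∏ u, ((if u = s then spin (τ u) else 1) * (if u = t then spin (τ u) else 1)) := by
        intro τ
        rw [Finset.prod_mul_distrib, Finset.prod_ite_eq' Finset.univ s (fun u => spin (τ u)),
          Finset.prod_ite_eq' Finset.univ t (fun u => spin (τ u))]
        simp
      rw [Finset.sum_congr rfl fun τ _ => hrw τ,
        ← Fintype.prod_sum (κ := fun _ : Fin n => Bool)
          (fun u b => (if u = s then spin b else 1) * (if u = t then spin b else 1)), if_neg hst]
      apply Finset.prod_eq_zero (Finset.mem_univ s)
      simp [hst, spin]
  have swap : ∑ τ : Fin n → Bool, ∑ s : Fin n, ∑ t : Fin n, spin (τ s) * spin (τ t)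
      = ∑ s : Fin n, ∑ t : Fin n, ∑ τ : Fin n → Bool, spin (τ s) * spin (τ t) := by
    rw [Finset.sum_comm]
    exact Finset.sum_congr rfl fun s _ => Finset.sum_comm
  rw [Finset.sum_congr rfl fun τ _ => expand τ, swap,
    Finset.sum_congr rfl fun s _ => Finset.sum_congr rfl fun t _ => inner s t]
  simp [Finset.sum_ite_eq, mul_comm]

lemma qmax_nonneg {k n : ℕ} (σ : Fin k → Fin n → Bool) : 0 ≤ qmax σ := NNReal.coe_nonneg _

lemma qmax_le {k n : ℕ} (σ : Fin k → Fin n → Bool) {r : ℝ} (hr : 0 ≤ r)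
    (h : ∀ p ∈ (Finset.univ : Finset (Fin k)).offDiag, |overlap (σ p.1) (σ p.2)| ≤ r) :
    qmax σ ≤ r := by
  have h2 : ((Finset.univ : Finset (Fin k)).offDiag.sup
      fun p => Real.toNNReal |overlap (σ p.1) (σ p.2)|) ≤ Real.toNNReal r :=
    Finset.sup_le fun p hp => Real.toNNReal_le_toNNReal (h p hp)
  calc qmax σ ≤ (Real.toNNReal r : ℝ) := NNReal.coe_le_coe.mpr h2
    _ = r := Real.coe_toNNReal r hr

lemma qmax_cases {k n : ℕ} (σ : Fin k → Fin n → Bool) :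
    qmax σ = 0 ∨ ∃ p ∈ (Finset.univ : Finset (Fin k)).offDiag,
      qmax σ = |overlap (σ p.1) (σ p.2)| := by
  rcases (Finset.univ : Finset (Fin k)).offDiag.eq_empty_or_nonempty with he | hne
  · left
    unfold qmax
    rw [he]
    simp
  · right
    obtain ⟨p, hp, hs⟩ := Finset.exists_mem_eq_sup _ hne
      (fun p : Fin k × Fin k => Real.toNNReal |overlap (σ p.1) (σ p.2)|)
    refine ⟨p, hp, ?_⟩
    unfold qmax
    rw [hs, Real.coe_toNNReal _ (abs_nonneg _)]

lemma pow_split (n k : ℕ) (hk : 0 < k) : ((2:ℝ)^n)^(k-1) * (2:ℝ)^n = (2:ℝ)^(n*k) := by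
  rw [← pow_succ, Nat.sub_add_cancel hk, ← pow_mul]

lemma avg_exp_overlap {n k : ℕ} (hk : 0 < k) (hn : 0 < n) {i j : Fin k} (hij : i ≠ j) (s : ℝ) :
    ((2:ℝ) ^ (n*k))⁻¹ * ∑ σ : Fin k → Fin n → Bool, Real.exp (s * overlap (σ i) (σ j))
      ≤ Real.exp (s ^ 2 * (n:ℝ)⁻¹ / 2) := by
  have hn' : (0:ℝ) < n := by exact_mod_cast hn
  rw [sum_pair_overlap i j hij (fun q => Real.exp (s * q))]
  have hexp : ∀ τ : Fin n → Bool, Real.exp (s * ((n:ℝ)⁻¹ * ∑ u, spin (τ u)))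
      = Real.exp ((s * (n:ℝ)⁻¹) * ∑ u, spin (τ u)) := by
    intro τ; ring_nf
  rw [Finset.sum_congr rfl fun τ _ => hexp τ, sum_exp_spin n (s * (n:ℝ)⁻¹)]
  set t := s * (n:ℝ)⁻¹ with ht
  have hch : Real.exp t + Real.exp (-t) ≤ 2 * Real.exp (t^2/2) := by
    have h := Real.cosh_le_exp_half_sq t
    rw [Real.cosh_eq] at h
    linarith
  have hpos : (0:ℝ) ≤ Real.exp t + Real.exp (-t) := by positivity
  have h1 : (Real.exp t + Real.exp (-t))^n ≤ (2 * Real.exp (t^2/2))^n :=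
    pow_le_pow_left₀ hpos hch n
  have h2 : (2 * Real.exp (t^2/2))^n = 2^n * Real.exp (n * (t^2/2)) := by
    rw [mul_pow, ← Real.exp_nat_mul]
  have hsq : (n:ℝ) * (t^2/2) = s^2 * (n:ℝ)⁻¹ / 2 := by
    rw [ht]
    field_simp
  calc ((2:ℝ)^(n*k))⁻¹ * (((2:ℝ)^n)^(k-1) * (Real.exp t + Real.exp (-t))^n)
      ≤ ((2:ℝ)^(n*k))⁻¹ * (((2:ℝ)^n)^(k-1) * ((2:ℝ)^n * Real.exp (s^2 * (n:ℝ)⁻¹ / 2))) := by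
        refine mul_le_mul_of_nonneg_left (mul_le_mul_of_nonneg_left ?_ (by positivity)) (by positivity)
        rw [← hsq, ← h2]
        exact h1
    _ = (((2:ℝ)^(n*k))⁻¹ * (((2:ℝ)^n)^(k-1) * (2:ℝ)^n)) * Real.exp (s^2 * (n:ℝ)⁻¹ / 2) := by
        ring
    _ = Real.exp (s^2 * (n:ℝ)⁻¹ / 2) := by
        rw [pow_split n k hk, inv_mul_cancel₀ (by positivity), one_mul]

lemma avg_abs_overlap {n k : ℕ} (hk : 0 < k) (hn : 0 < n) {i j : Fin k} (hij : i ≠ j) :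
    ((2:ℝ) ^ (n*k))⁻¹ * ∑ σ : Fin k → Fin n → Bool, |overlap (σ i) (σ j)|
      ≤ (n:ℝ) ^ (-(1/2 : ℝ)) := by
  have hn' : (0:ℝ) < n := by exact_mod_cast hn
  rw [sum_pair_overlap i j hij (fun q => |q|)]
  have habs : ∀ τ : Fin n → Bool, |(n:ℝ)⁻¹ * ∑ u, spin (τ u)|
      = (n:ℝ)⁻¹ * |∑ u, spin (τ u)| := by
    intro τ; rw [abs_mul, abs_of_nonneg (by positivity)]
  rw [Finset.sum_congr rfl fun τ _ => habs τ, ← Finset.mul_sum]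
  have hCS : (∑ τ : Fin n → Bool, |∑ u, spin (τ u)|)^2 ≤ (2:ℝ)^n * ((2:ℝ)^n * n) := by
    have h := sq_sum_le_card_mul_sum_sq (s := (Finset.univ : Finset (Fin n → Bool)))
      (f := fun τ => |∑ u, spin (τ u)|)
    have hcard : ((Finset.univ : Finset (Fin n → Bool)).card : ℝ) = (2:ℝ)^n := by
      rw [Finset.card_univ]
      simp [Fintype.card_fun]
    have hsum : ∑ τ : Fin n → Bool, |∑ u, spin (τ u)|^2 = (2:ℝ)^n * n := by
      rw [Finset.sum_congr rfl fun τ _ => sq_abs _]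
      exact sum_sq_spin n
    rw [hcard, hsum] at h
    exact h
  have hnonneg : (0:ℝ) ≤ ∑ τ : Fin n → Bool, |∑ u, spin (τ u)| :=
    Finset.sum_nonneg fun τ _ => abs_nonneg _
  have hS : ∑ τ : Fin n → Bool, |∑ u, spin (τ u)| ≤ (2:ℝ)^n * Real.sqrt n := by
    have h1 : ∑ τ : Fin n → Bool, |∑ u, spin (τ u)| ≤ Real.sqrt ((2:ℝ)^n * ((2:ℝ)^n * n)) := by
      rw [← Real.sqrt_sq hnonneg]
      exact Real.sqrt_le_sqrt hCS
    have h2 : Real.sqrt ((2:ℝ)^n * ((2:ℝ)^n * n)) = (2:ℝ)^n * Real.sqrt n := by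
      rw [← mul_assoc, ← sq, Real.sqrt_mul (sq_nonneg _), Real.sqrt_sq (by positivity)]
    rw [h2] at h1
    exact h1
  have hfin : (n:ℝ)⁻¹ * Real.sqrt n = (n:ℝ) ^ (-(1/2 : ℝ)) := by
    rw [Real.sqrt_eq_rpow, ← Real.rpow_neg_one (n:ℝ), ← Real.rpow_add hn']
    norm_num
  calc ((2:ℝ)^(n*k))⁻¹ * (((2:ℝ)^n)^(k-1) * ((n:ℝ)⁻¹ * ∑ τ : Fin n → Bool, |∑ u, spin (τ u)|))
      ≤ ((2:ℝ)^(n*k))⁻¹ * (((2:ℝ)^n)^(k-1) * ((n:ℝ)⁻¹ * ((2:ℝ)^n * Real.sqrt n))) := by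
        refine mul_le_mul_of_nonneg_left (mul_le_mul_of_nonneg_left
          (mul_le_mul_of_nonneg_left hS (by positivity)) (by positivity)) (by positivity)
    _ = (((2:ℝ)^(n*k))⁻¹ * (((2:ℝ)^n)^(k-1) * (2:ℝ)^n)) * ((n:ℝ)⁻¹ * Real.sqrt n) := by
        ring
    _ = (n:ℝ) ^ (-(1/2 : ℝ)) := by
        rw [pow_split n k hk, inv_mul_cancel₀ (by positivity), one_mul, hfin]

/-- If `α_n > 0` with `α_n n^{−1/4} → 0` and `|f(σ^(1),…,σ^(k))| ≤ c α_n² q_max`, then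
`2^{−nk} ∑_{σ^(1),…,σ^(k)} exp(f) = 1 + o(1)` as `n → ∞`. -/
theorem sum_exp_factor (k : ℕ) (hk : 0 < k) (c : ℝ) (hc : 0 < c) (α : ℕ → ℝ)
    (hα : ∀ n, 0 < α n)
    (hα4 : Tendsto (fun n : ℕ => α n * ((n : ℝ) ^ (-(1 / 4) : ℝ))) atTop (nhds 0))
    (f : (n : ℕ) → (Fin k → Fin n → Bool) → ℝ)
    (hf : ∀ n (σ : Fin k → Fin n → Bool), |f n σ| ≤ c * (α n) ^ 2 * qmax σ) :
    Tendsto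
      (fun n : ℕ =>
        ((2 : ℝ) ^ (n * k))⁻¹ * ∑ σ : Fin k → Fin n → Bool, Real.exp (f n σ))
      atTop (nhds 1) := by
  classical
  set P := (Finset.univ : Finset (Fin k)).offDiag with hPdef
  have hcard : (P.card : ℝ) ≤ (k:ℝ)^2 := by
    have h1 : P.card ≤ k * k := by
      rw [hPdef, Finset.offDiag_card, Finset.card_univ, Fintype.card_fin]
      omega
    calc (P.card : ℝ) ≤ ((k*k : ℕ) : ℝ) := by exact_mod_cast h1
      _ = (k:ℝ)^2 := by push_cast; ring
  set u : ℕ → ℝ := fun n => c * α n ^ 2 * (n:ℝ) ^ (-(1/2 : ℝ)) with hudef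
  have hu_nonneg : ∀ n, 0 ≤ u n := by
    intro n
    have : (0:ℝ) ≤ (n:ℝ) ^ (-(1/2 : ℝ)) := Real.rpow_nonneg (Nat.cast_nonneg n) _
    positivity
  have hueq : ∀ n : ℕ, u n = c * ((α n * (n:ℝ) ^ (-(1/4 : ℝ))) * (α n * (n:ℝ) ^ (-(1/4 : ℝ)))) := by
    intro n
    have hr : (n:ℝ) ^ (-(1/4 : ℝ)) * (n:ℝ) ^ (-(1/4 : ℝ)) = (n:ℝ) ^ (-(1/2 : ℝ)) := by
      rw [← Real.rpow_add' (Nat.cast_nonneg n) (by norm_num)]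
      norm_num
    calc u n = c * (α n * α n) * ((n:ℝ) ^ (-(1/4:ℝ)) * (n:ℝ) ^ (-(1/4:ℝ))) := by
          rw [hr]; simp only [hudef]; ring
      _ = c * ((α n * (n:ℝ) ^ (-(1/4 : ℝ))) * (α n * (n:ℝ) ^ (-(1/4 : ℝ)))) := by ring
  have hu0 : Tendsto u atTop (nhds 0) := by
    have h := (hα4.mul hα4).const_mul c
    rw [mul_zero, mul_zero] at h
    exact h.congr fun n => (hueq n).symm
  have hLo : Tendsto (fun n => 1 - (k:ℝ)^2 * u n) atTop (nhds 1) := by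
    have h := (hu0.const_mul ((k:ℝ)^2)).const_sub 1
    rw [mul_zero, sub_zero] at h
    exact h
  have hUp : Tendsto (fun n => 1 + (k:ℝ)^2 * (2*(Real.exp (u n^2/2) - 1) + u n))
      atTop (nhds 1) := by
    have h1 : Tendsto (fun n => u n^2/2) atTop (nhds 0) := by
      have h := (hu0.mul hu0).div_const 2
      simp only [mul_zero, zero_div] at h
      exact h.congr fun n => by rw [sq]
    have h2 : Tendsto (fun n => Real.exp (u n^2/2)) atTop (nhds 1) := by
      have h := (Real.continuous_exp.tendsto 0).comp h1
      rw [Real.exp_zero] at h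
      exact h.congr fun n => rfl
    have h3 := (((h2.sub_const 1).const_mul 2).add hu0).const_mul ((k:ℝ)^2)
    have h4 := h3.const_add 1
    have h5 : (1:ℝ) + (k:ℝ)^2 * (2 * ((1:ℝ) - 1) + 0) = 1 := by ring
    rw [h5] at h4
    exact h4
  apply tendsto_of_tendsto_of_tendsto_of_le_of_le' hLo hUp
  · -- lower bound
    filter_upwards [eventually_ge_atTop 1] with n hn
    have hn0 : 0 < n := hn
    have hn' : (0:ℝ) < n := by exact_mod_cast hn0
    set s := c * α n ^ 2 with hsdef
    have hs : 0 ≤ s := by positivity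
    set ρ := (n:ℝ) ^ (-(1/2 : ℝ)) with hρdef
    have hρ : 0 ≤ ρ := Real.rpow_nonneg (Nat.cast_nonneg n) _
    set N := (2:ℝ)^(n*k) with hNdef
    have hN : (0:ℝ) < N := by positivity
    have hsum1 : ∑ _σ : Fin k → Fin n → Bool, (1:ℝ) = N := by
      rw [Finset.sum_const, Finset.card_univ, nsmul_eq_mul, mul_one, hNdef]
      simp only [Fintype.card_fun, Fintype.card_bool, Fintype.card_fin]
      push_cast
      rw [← pow_mul]
    have step1 : ∀ σ : Fin k → Fin n → Bool,
        1 - s * ∑ p ∈ P, |overlap (σ p.1) (σ p.2)| ≤ Real.exp (f n σ) := by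
      intro σ
      have hq : qmax σ ≤ ∑ p ∈ P, |overlap (σ p.1) (σ p.2)| :=
        qmax_le σ (Finset.sum_nonneg fun p _ => abs_nonneg _)
          (fun p hp => Finset.single_le_sum
            (f := fun p : Fin k × Fin k => |overlap (σ p.1) (σ p.2)|)
            (fun q _ => abs_nonneg _) hp)
      have h1 : -(s * qmax σ) ≤ f n σ := neg_le_of_abs_le (hf n σ)
      have h2 : s * qmax σ ≤ s * ∑ p ∈ P, |overlap (σ p.1) (σ p.2)| :=
        mul_le_mul_of_nonneg_left hq hs
      have h3 := Real.add_one_le_exp (-(s * qmax σ))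
      have h4 : Real.exp (-(s * qmax σ)) ≤ Real.exp (f n σ) := Real.exp_le_exp.mpr h1
      linarith
    have hA : ∀ p ∈ P, N⁻¹ * ∑ σ : Fin k → Fin n → Bool, |overlap (σ p.1) (σ p.2)| ≤ ρ := by
      intro p hp
      exact avg_abs_overlap hk hn0 (Finset.mem_offDiag.mp hp).2.2
    have hexp_ge : ∑ σ : Fin k → Fin n → Bool, (1 - s * ∑ p ∈ P, |overlap (σ p.1) (σ p.2)|)
        ≤ ∑ σ : Fin k → Fin n → Bool, Real.exp (f n σ) :=
      Finset.sum_le_sum fun σ _ => step1 σ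
    have hid : ∑ σ : Fin k → Fin n → Bool, (1 - s * ∑ p ∈ P, |overlap (σ p.1) (σ p.2)|)
        = N - s * ∑ p ∈ P, ∑ σ : Fin k → Fin n → Bool, |overlap (σ p.1) (σ p.2)| := by
      rw [Finset.sum_sub_distrib, hsum1, ← Finset.mul_sum, Finset.sum_comm]
    have hT : ∑ p ∈ P, (N⁻¹ * ∑ σ : Fin k → Fin n → Bool, |overlap (σ p.1) (σ p.2)|)
        ≤ (P.card : ℝ) * ρ := by
      calc ∑ p ∈ P, (N⁻¹ * ∑ σ : Fin k → Fin n → Bool, |overlap (σ p.1) (σ p.2)|)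
          ≤ ∑ _p ∈ P, ρ := Finset.sum_le_sum hA
        _ = (P.card : ℝ) * ρ := by rw [Finset.sum_const, nsmul_eq_mul]
    have hun : u n = s * ρ := by simp only [hudef, hsdef, hρdef]
    calc 1 - (k:ℝ)^2 * u n ≤ 1 - s * ((P.card:ℝ) * ρ) := by
          rw [hun]
          have : s * ((P.card:ℝ) * ρ) ≤ (k:ℝ)^2 * (s * ρ) := by
            have := mul_le_mul_of_nonneg_right hcard hρ
            nlinarith
          linarith
      _ ≤ 1 - s * ∑ p ∈ P, (N⁻¹ * ∑ σ : Fin k → Fin n → Bool, |overlap (σ p.1) (σ p.2)|) := by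
          have := mul_le_mul_of_nonneg_left hT hs
          linarith
      _ = N⁻¹ * (N - s * ∑ p ∈ P, ∑ σ : Fin k → Fin n → Bool, |overlap (σ p.1) (σ p.2)|) := by
          rw [← Finset.mul_sum, mul_sub, inv_mul_cancel₀ (ne_of_gt hN)]
          ring
      _ ≤ N⁻¹ * ∑ σ : Fin k → Fin n → Bool, Real.exp (f n σ) := by
          apply mul_le_mul_of_nonneg_left _ (inv_nonneg.mpr hN.le)
          rw [← hid]
          exact hexp_ge
  · -- upper bound
    filter_upwards [eventually_ge_atTop 1] with n hn
    have hn0 : 0 < n := hn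
    have hn' : (0:ℝ) < n := by exact_mod_cast hn0
    set s := c * α n ^ 2 with hsdef
    have hs : 0 ≤ s := by positivity
    set ρ := (n:ℝ) ^ (-(1/2 : ℝ)) with hρdef
    have hρ : 0 ≤ ρ := Real.rpow_nonneg (Nat.cast_nonneg n) _
    have hρ2 : ρ^2 = (n:ℝ)⁻¹ := by
      rw [hρdef, ← Real.rpow_natCast ((n:ℝ) ^ (-(1/2:ℝ))) 2,
        ← Real.rpow_mul (Nat.cast_nonneg n)]
      norm_num
      exact (Real.rpow_neg_one (n:ℝ))
    set N := (2:ℝ)^(n*k) with hNdef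
    have hN : (0:ℝ) < N := by positivity
    have hsum1 : ∑ _σ : Fin k → Fin n → Bool, (1:ℝ) = N := by
      rw [Finset.sum_const, Finset.card_univ, nsmul_eq_mul, mul_one, hNdef]
      simp only [Fintype.card_fun, Fintype.card_bool, Fintype.card_fin]
      push_cast
      rw [← pow_mul]
    have hun : u n = s * ρ := by simp only [hudef, hsdef, hρdef]
    have hu2 : u n ^ 2 / 2 = s^2 * (n:ℝ)⁻¹ / 2 := by
      rw [hun, mul_pow, hρ2]
    -- pointwise bound
    set D : Fin k × Fin k → (Fin k → Fin n → Bool) → ℝ := fun p σ =>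
      Real.exp (s * overlap (σ p.1) (σ p.2)) + Real.exp (-(s * overlap (σ p.1) (σ p.2))) - 2
        + s * |overlap (σ p.1) (σ p.2)| with hDdef
    have stepU : ∀ σ : Fin k → Fin n → Bool,
        Real.exp (f n σ) ≤ 1 + ∑ p ∈ P, D p σ := by
      intro σ
      have e1 : Real.exp (f n σ) ≤ Real.exp (s * qmax σ) :=
        Real.exp_le_exp.mpr (le_of_abs_le (hf n σ))
      have hterm : ∀ p ∈ P, (0:ℝ) ≤ Real.exp (s * |overlap (σ p.1) (σ p.2)|) - 1 := by
        intro p hp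
        have := Real.one_le_exp (mul_nonneg hs (abs_nonneg (overlap (σ p.1) (σ p.2))))
        linarith
      have e2 : Real.exp (s * qmax σ)
          ≤ 1 + ∑ p ∈ P, (Real.exp (s * |overlap (σ p.1) (σ p.2)|) - 1) := by
        rcases qmax_cases σ with h0 | ⟨p₀, hp₀, hq⟩
        · rw [h0, mul_zero, Real.exp_zero]
          have := Finset.sum_nonneg hterm
          linarith
        · rw [hq]
          have hsingle := Finset.single_le_sum hterm hp₀
          linarith
      have e3 : ∀ p ∈ P, Real.exp (s * |overlap (σ p.1) (σ p.2)|) - 1 ≤ D p σ := by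
        intro p hp
        simp only [hDdef]
        set q := overlap (σ p.1) (σ p.2) with hqdef
        rcases abs_choice q with h | h
        · rw [h]
          have h5 := Real.add_one_le_exp (-(s*q))
          have h6 : 0 ≤ s * |q| := by positivity
          rw [h] at h6
          linarith
        · rw [h, mul_neg]
          have h5 := Real.add_one_le_exp (s*q)
          have h6 : 0 ≤ s * |q| := by positivity
          rw [h, mul_neg] at h6
          linarith
      have e4 := Finset.sum_le_sum e3
      linarith [e1, e2, e4]
    have hDavg : ∀ p ∈ P, N⁻¹ * ∑ σ : Fin k → Fin n → Bool, D p σ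
        ≤ 2*(Real.exp (u n^2/2) - 1) + u n := by
      intro p hp
      have hpne : p.1 ≠ p.2 := (Finset.mem_offDiag.mp hp).2.2
      have hA := avg_exp_overlap hk hn0 hpne s
      have hB := avg_exp_overlap hk hn0 hpne (-s)
      have hC := avg_abs_overlap hk hn0 hpne
      have hBeq : ∑ σ : Fin k → Fin n → Bool, Real.exp (-s * overlap (σ p.1) (σ p.2))
          = ∑ σ : Fin k → Fin n → Bool, Real.exp (-(s * overlap (σ p.1) (σ p.2))) := by
        apply Finset.sum_congr rfl
        intro σ _
        rw [neg_mul]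
      rw [hBeq, neg_sq] at hB
      have h2N : ∑ _σ : Fin k → Fin n → Bool, (2:ℝ) = 2 * N := by
        rw [show (2:ℝ) = 2 * 1 by norm_num, ← Finset.mul_sum, hsum1]
        norm_num
      have hsplit : ∑ σ : Fin k → Fin n → Bool, D p σ
          = (∑ σ : Fin k → Fin n → Bool, Real.exp (s * overlap (σ p.1) (σ p.2)))
            + (∑ σ : Fin k → Fin n → Bool, Real.exp (-(s * overlap (σ p.1) (σ p.2))))
            - 2 * N
            + s * ∑ σ : Fin k → Fin n → Bool, |overlap (σ p.1) (σ p.2)| := by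
        simp only [hDdef]
        rw [← h2N]
        simp only [Finset.sum_add_distrib, Finset.sum_sub_distrib, ← Finset.mul_sum]
      have h1 : N⁻¹ * N = 1 := inv_mul_cancel₀ hN.ne'
      have hCs : s * (N⁻¹ * ∑ σ : Fin k → Fin n → Bool, |overlap (σ p.1) (σ p.2)|)
          ≤ s * ρ := mul_le_mul_of_nonneg_left hC hs
      calc N⁻¹ * ∑ σ : Fin k → Fin n → Bool, D p σ
          = N⁻¹ * (∑ σ : Fin k → Fin n → Bool, Real.exp (s * overlap (σ p.1) (σ p.2)))
            + N⁻¹ * (∑ σ : Fin k → Fin n → Bool, Real.exp (-(s * overlap (σ p.1) (σ p.2))))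
            - 2
            + s * (N⁻¹ * ∑ σ : Fin k → Fin n → Bool, |overlap (σ p.1) (σ p.2)|) := by
            rw [hsplit]
            linear_combination (-2 : ℝ) * h1
        _ ≤ Real.exp (s^2 * (n:ℝ)⁻¹ / 2) + Real.exp (s^2 * (n:ℝ)⁻¹ / 2) - 2 + s * ρ := by
            linarith [hA, hB, hCs]
        _ = 2*(Real.exp (u n^2/2) - 1) + u n := by
            rw [hu2, hun]
            ring
    -- assemble
    have hsumU : ∑ σ : Fin k → Fin n → Bool, Real.exp (f n σ)
        ≤ N + ∑ p ∈ P, ∑ σ : Fin k → Fin n → Bool, D p σ := by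
      have h := Finset.sum_le_sum (fun σ (_ : σ ∈ (Finset.univ : Finset (Fin k → Fin n → Bool)))
        => stepU σ)
      rw [Finset.sum_add_distrib, hsum1, Finset.sum_comm] at h
      exact h
    have hbr : 0 ≤ 2*(Real.exp (u n^2/2) - 1) + u n := by
      have h1 := Real.one_le_exp (show (0:ℝ) ≤ u n^2/2 by positivity)
      have h2 := hu_nonneg n
      linarith
    calc N⁻¹ * ∑ σ : Fin k → Fin n → Bool, Real.exp (f n σ)
        ≤ N⁻¹ * (N + ∑ p ∈ P, ∑ σ : Fin k → Fin n → Bool, D p σ) :=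
          mul_le_mul_of_nonneg_left hsumU (inv_nonneg.mpr hN.le)
      _ = 1 + ∑ p ∈ P, (N⁻¹ * ∑ σ : Fin k → Fin n → Bool, D p σ) := by
          rw [← Finset.mul_sum, mul_add, inv_mul_cancel₀ hN.ne']
      _ ≤ 1 + (P.card : ℝ) * (2*(Real.exp (u n^2/2) - 1) + u n) := by
          have h := Finset.sum_le_sum hDavg
          rw [Finset.sum_const, nsmul_eq_mul] at h
          linarith
      _ ≤ 1 + (k:ℝ)^2 * (2*(Real.exp (u n^2/2) - 1) + u n) := by
          have := mul_le_mul_of_nonneg_right hcard hbr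
          linarith
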